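/- Let ξ be a Reeb field, let φ ∈ cpsh(ξ), and let (ξ_i) be a sequence of Reeb fields converging to ξ in N_ℝ. Then there exists a sequence φ_i ∈ H(ξ_i) converging to φ uniformly on every compact subset of X^an∖{o}. -/

import Mathlib

open Filter Topology
open scoped Classical

noncomputable section

/-- A (real) semivaluation on `R` trivial on `k`, encoded as a function `R → ℝ ∪ {+∞} ⊆ EReal`. -/
def IsSemival (k : Type*) {R : Type*} [Field k] [CommRing R] [Algebra k R]
    (v : R → EReal) : Prop :=
  (∀ f, v f ≠ ⊥) ∧ (∀ f g, v (f * g) = v f + v g) ∧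
    (∀ f g, min (v f) (v g) ≤ v (f + g)) ∧ v 0 = ⊤ ∧
    ∀ c : k, c ≠ 0 → v (algebraMap k R c) = 0

/-- The pairing `⟨ξ, α⟩` between `ξ ∈ N_ℝ` and a weight `α ∈ M`. -/
def pairing {r : ℕ} (ξ : Fin r → ℝ) (α : Fin r → ℤ) : ℝ := ∑ i, ξ i * (α i : ℝ)

variable {k : Type*} [Field k] [IsAlgClosed k] [CharZero k]
variable {R : Type*} [CommRing R] [IsDomain R] [IsIntegrallyClosed R] [Algebra k R]
  [Algebra.FiniteType k R]
variable {r : ℕ} (𝒜 : (Fin r → ℤ) → Submodule k R) [GradedAlgebra 𝒜]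

/-- `ξ` is a Reeb field: `⟨ξ,α⟩ > 0` for all `α ∈ Λ ∖ {0}`. -/
def IsReeb (ξ : Fin r → ℝ) : Prop :=
  ∀ α : Fin r → ℤ, α ≠ 0 → 𝒜 α ≠ ⊥ → 0 < pairing ξ α

/-- The maximal ideal `𝔪` of the cone point. -/
def mIdeal : Ideal R := Ideal.span {f : R | ∃ α, α ≠ 0 ∧ f ∈ 𝒜 α}

/-- The semivaluation of the cone point `o`: `+∞` on `𝔪`, `0` elsewhere. -/
def oFun : R → EReal := fun f => if f ∈ mIdeal 𝒜 then (⊤ : EReal) else 0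

/-- The punctured Berkovich cone `X^an ∖ {o}`. -/
def XanP : Set (R → EReal) := {v | IsSemival k v ∧ v ≠ oFun 𝒜}

/-- The term `(log|f| + λ)/⟨ξ,α⟩` evaluated at `v`; recall `log|f|(v) = -v(f)`. -/
def fsTerm (ξ : Fin r → ℝ) (α : Fin r → ℤ) (f : R) (lam : ℝ) (v : R → EReal) : EReal :=
  (((pairing ξ α)⁻¹ : ℝ) : EReal) * (-(v f) + (lam : EReal))

/-- Fubini–Study functions with polarization `ξ`. -/
def IsFS (ξ : Fin r → ℝ) (φ : XanP 𝒜 → ℝ) : Prop :=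
  ∃ (N : ℕ) (f : Fin N → R) (α : Fin N → Fin r → ℤ) (lam : Fin N → ℝ),
    (∀ j, α j ≠ 0 ∧ f j ∈ 𝒜 (α j) ∧ f j ≠ 0) ∧
    (Ideal.span (Set.range f)).radical = mIdeal 𝒜 ∧
    ∀ v : XanP 𝒜, (φ v : EReal) = ⨆ j, fsTerm ξ (α j) (f j) (lam j) v.1

/-- Continuous `ξ`-psh functions: the closure of `H(ξ)` in `C⁰(X^an∖{o})` with the
topology of uniform convergence on compact subsets (compact-open topology). -/
def cpsh (ξ : Fin r → ℝ) : Set C(↥(XanP 𝒜), ℝ) := closure {φ | IsFS 𝒜 ξ ⇑φ}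

/-- `ξ`-psh functions: pointwise limits of decreasing nets of continuous `ξ`-psh
functions, not identically `-∞`, with values in `ℝ ∪ {-∞}`. -/
def IsPsh (ξ : Fin r → ℝ) (φ : XanP 𝒜 → EReal) : Prop :=
  (∀ v, φ v ≠ ⊤) ∧ (∃ v, φ v ≠ ⊥) ∧
  ∃ (ι : Type) (le : ι → ι → Prop),
    Nonempty ι ∧ (∀ i j : ι, ∃ l, le i l ∧ le j l) ∧
    ∃ φi : ι → C(↥(XanP 𝒜), ℝ),
      (∀ i, φi i ∈ cpsh 𝒜 ξ) ∧
      (∀ i j, le i j → ∀ v, φi j v ≤ φi i v) ∧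
      ∀ v, (⨅ i, ((φi i v : ℝ) : EReal)) = φ v

/-- The NA link `X₀ = {v : v(𝔪) = 0}`, as a subset of the punctured cone. -/
def linkSet : Set (↥(XanP 𝒜)) :=
  {v | (∀ f ∈ mIdeal 𝒜, f ≠ 0 → 0 ≤ v.1 f) ∧
    sInf {x : EReal | ∃ f ∈ mIdeal 𝒜, f ≠ 0 ∧ x = v.1 f} = 0}

/-- `T(v;ξ) = sup { v(f)/⟨ξ,α⟩ : α ∈ Λ∖{0}, f ∈ R_α ∖ {0} }`. -/
def Tfun (v : R → EReal) (ξ : Fin r → ℝ) : EReal :=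
  sSup {x : EReal | ∃ (α : Fin r → ℤ) (f : R), α ≠ 0 ∧ f ∈ 𝒜 α ∧ f ≠ 0 ∧
    x = (((pairing ξ α)⁻¹ : ℝ) : EReal) * v f}

end

set_option linter.unusedSectionVars false

section AuxNA

variable {k : Type*} [Field k] [IsAlgClosed k] [CharZero k]
variable {R : Type*} [CommRing R] [IsDomain R] [IsIntegrallyClosed R] [Algebra k R]
  [Algebra.FiniteType k R]
variable {r : ℕ} (𝒜 : (Fin r → ℤ) → Submodule k R) [GradedAlgebra 𝒜]

namespace NA

lemma val_neg {v : R → EReal} (hv : IsSemival k v) (f : R) : v (-f) = v f := by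
  have h1 : v (algebraMap k R (-1)) = 0 := hv.2.2.2.2 (-1) (by norm_num)
  have h2 : -f = algebraMap k R (-1) * f := by rw [map_neg, map_one]; ring
  rw [h2, hv.2.1, h1, zero_add]

lemma val_top_of_mem_span {v : R → EReal} (hv : IsSemival k v) {H : Set R}
    (hH : ∀ h ∈ H, v h = ⊤) {f : R} (hf : f ∈ Ideal.span H) : v f = ⊤ := by
  refine Submodule.span_induction (fun x hx => hH x hx) hv.2.2.2.1 ?_ ?_ hf
  · intro x y _ _ hx hy
    have := hv.2.2.1 x y
    rw [hx, hy, min_self] at this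
    exact top_le_iff.mp this
  · intro a x _ hx
    rw [smul_eq_mul, hv.2.1, hx]
    exact EReal.add_top_of_ne_bot (hv.1 a)

lemma decomp_exists (h0 : 𝒜 0 = Submodule.span k {(1 : R)}) (f : R) :
    ∃ c : k, f - algebraMap k R c ∈ mIdeal 𝒜 := by
  classical
  have hd0 : ((DirectSum.decompose 𝒜 f) 0 : R) ∈ Submodule.span k {(1 : R)} := by
    rw [← h0]; exact SetLike.coe_mem _
  rw [Submodule.mem_span_singleton] at hd0
  obtain ⟨c, hc⟩ := hd0
  refine ⟨c, ?_⟩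
  have halg : algebraMap k R c = ((DirectSum.decompose 𝒜 f) 0 : R) := by
    rw [← hc, Algebra.algebraMap_eq_smul_one]
  have hsum := DirectSum.sum_support_decompose 𝒜 f
  set s := DFinsupp.support (DirectSum.decompose 𝒜 f) with hs
  have key : f - ((DirectSum.decompose 𝒜 f) 0 : R)
      = ∑ i ∈ s.erase 0, ((DirectSum.decompose 𝒜 f) i : R) := by
    by_cases h0s : (0 : Fin r → ℤ) ∈ s
    · have h2 : ((DirectSum.decompose 𝒜 f) 0 : R)
          + ∑ i ∈ s.erase 0, ((DirectSum.decompose 𝒜 f) i : R) = f := by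
        exact (Finset.add_sum_erase s (fun i => ((DirectSum.decompose 𝒜 f) i : R)) h0s).trans hsum
      exact sub_eq_of_eq_add' h2.symm
    · have hz : ((DirectSum.decompose 𝒜 f) 0 : R) = 0 := by
        rw [DFinsupp.notMem_support_iff.mp h0s]; rfl
      rw [hz, sub_zero, Finset.erase_eq_of_notMem h0s]
      exact hsum.symm
  rw [halg, key]
  refine Ideal.sum_mem _ fun i hi => Ideal.subset_span ?_
  exact ⟨i, Finset.ne_of_mem_erase hi, SetLike.coe_mem _⟩

lemma eq_oFun (h0 : 𝒜 0 = Submodule.span k {(1 : R)}) {v : R → EReal} (hv : IsSemival k v)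
    (hm : ∀ f ∈ mIdeal 𝒜, v f = ⊤) : v = oFun 𝒜 := by
  funext f
  rw [oFun]
  split_ifs with hf
  · exact hm f hf
  · obtain ⟨c, hc⟩ := decomp_exists 𝒜 h0 f
    have hcne : c ≠ 0 := by
      rintro rfl
      exact hf (by simpa using hc)
    have hvc := hv.2.2.2.2 c hcne
    have hvg := hm _ hc
    have hge : (0 : EReal) ≤ v f := by
      have h1 := hv.2.2.1 (algebraMap k R c) (f - algebraMap k R c)
      rw [add_sub_cancel] at h1
      refine le_trans ?_ h1
      rw [hvc, hvg]
      simp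
    have hle : v f ≤ 0 := by
      have h1 := hv.2.2.1 f (algebraMap k R c - f)
      rw [add_sub_cancel f (algebraMap k R c)] at h1
      have hg2 : v (algebraMap k R c - f) = ⊤ := by
        have he : algebraMap k R c - f = -(f - algebraMap k R c) := by ring
        rw [he, val_neg hv, hvg]
      rw [hvc, hg2, min_eq_left le_top] at h1
      exact h1
    exact le_antisymm hle hge

lemma exists_lower_bound (G : Finset R) (hG : Algebra.adjoin k (G : Set R) = ⊤) (n : ℝ)
    (f : R) : ∃ m : ℝ, ∀ v : R → EReal, IsSemival k v →
      (∀ g ∈ G, (n : EReal) ≤ v g) → (m : EReal) ≤ v f := by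
  have hf : f ∈ Algebra.adjoin k (G : Set R) := by rw [hG]; trivial
  refine Algebra.adjoin_induction ?_ ?_ ?_ ?_ hf
  · exact fun x hx => ⟨n, fun v _ hb => hb x hx⟩
  · intro c
    refine ⟨0, fun v hv _ => ?_⟩
    by_cases hc : c = 0
    · rw [hc, map_zero, hv.2.2.2.1]; simp
    · rw [hv.2.2.2.2 c hc]; simp
  · rintro x y - - ⟨m₁, h₁⟩ ⟨m₂, h₂⟩
    refine ⟨min m₁ m₂, fun v hv hb => le_trans ?_ (hv.2.2.1 x y)⟩
    exact le_min (le_trans (by exact_mod_cast min_le_left m₁ m₂) (h₁ v hv hb))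
      (le_trans (by exact_mod_cast min_le_right m₁ m₂) (h₂ v hv hb))
  · rintro x y - - ⟨m₁, h₁⟩ ⟨m₂, h₂⟩
    refine ⟨m₁ + m₂, fun v hv hb => ?_⟩
    rw [hv.2.1 x y]
    calc ((m₁ + m₂ : ℝ) : EReal) = (m₁ : EReal) + (m₂ : EReal) := EReal.coe_add m₁ m₂
      _ ≤ v x + v y := add_le_add (h₁ v hv hb) (h₂ v hv hb)


lemma fsTerm_coe {ξ' : Fin r → ℝ} {α : Fin r → ℤ} {g : R} {lam : ℝ} {v : R → EReal}
    (hb : v g ≠ ⊥) (ht : v g ≠ ⊤) :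
    fsTerm ξ' α g lam v = ((((pairing ξ' α)⁻¹ * (lam - (v g).toReal)) : ℝ) : EReal) := by
  obtain ⟨x, hx⟩ : ∃ x : ℝ, v g = (x : EReal) := ⟨_, (EReal.coe_toReal ht hb).symm⟩
  rw [fsTerm, hx, EReal.toReal_coe, ← EReal.coe_neg, ← EReal.coe_add, ← EReal.coe_mul,
    EReal.coe_eq_coe_iff]
  ring

lemma fsTerm_bot {ξ' : Fin r → ℝ} {α : Fin r → ℤ} {g : R} {lam : ℝ} {v : R → EReal}
    (hp : 0 < pairing ξ' α) (ht : v g = ⊤) : fsTerm ξ' α g lam v = ⊥ := by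
  rw [fsTerm, ht, EReal.neg_top, EReal.bot_add, EReal.coe_mul_bot_of_pos (inv_pos.mpr hp)]

lemma iSup_eq_coe_sup' {n : ℕ} {t : Fin n → EReal} {J : Finset (Fin n)} (hJ : J.Nonempty)
    {s : Fin n → ℝ} (hmem : ∀ j ∈ J, t j = ((s j : ℝ) : EReal)) (hnot : ∀ j ∉ J, t j = ⊥) :
    ⨆ j, t j = ((J.sup' hJ s : ℝ) : EReal) := by
  apply le_antisymm
  · refine iSup_le fun j => ?_
    by_cases hj : j ∈ J
    · rw [hmem j hj]; exact EReal.coe_le_coe_iff.mpr (Finset.le_sup' s hj)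
    · rw [hnot j hj]; exact bot_le
  · obtain ⟨j₀, hj₀, he⟩ := Finset.exists_mem_eq_sup' hJ s
    rw [he, ← hmem j₀ hj₀]
    exact le_iSup t j₀

lemma realmax {ι : Type*} {J : Finset ι} (hJ : J.Nonempty) (s ρ : ι → ℝ) {t : ℝ}
    (h1 : ∀ j ∈ J, |ρ j - 1| ≤ t) (h2 : ∀ j ∈ J, 0 < ρ j) :
    |J.sup' hJ (fun j => ρ j * s j) - J.sup' hJ s| ≤ t * |J.sup' hJ s| := by
  have ht : 0 ≤ t := le_trans (abs_nonneg _) (h1 hJ.choose hJ.choose_spec)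
  set M := J.sup' hJ s with hMdef
  have hub : ∀ j ∈ J, s j ≤ M := fun j hj => Finset.le_sup' s hj
  rw [abs_sub_le_iff]
  constructor
  · rw [sub_le_iff_le_add]
    refine Finset.sup'_le _ _ fun j hj => ?_
    obtain ⟨hρl, hρu⟩ := abs_le.mp (h1 j hj)
    rcases le_or_gt 0 (s j) with hs | hs
    · have hM0 : 0 ≤ M := le_trans hs (hub j hj)
      calc ρ j * s j ≤ (1 + t) * s j := mul_le_mul_of_nonneg_right (by linarith) hs
        _ ≤ (1 + t) * M := mul_le_mul_of_nonneg_left (hub j hj) (by linarith)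
        _ ≤ t * |M| + M := by rw [abs_of_nonneg hM0]; nlinarith
    · rcases le_or_gt 0 M with hM0 | hM0
      · have hss : ρ j * s j ≤ 0 := mul_nonpos_of_nonneg_of_nonpos (h2 j hj).le hs.le
        have h3 : 0 ≤ t * |M| := mul_nonneg ht (abs_nonneg M)
        linarith
      · have habs : |M| = -M := abs_of_neg hM0
        rcases le_or_gt 0 (1 - t) with h1t | h1t
        · calc ρ j * s j ≤ (1 - t) * s j := mul_le_mul_of_nonpos_right (by linarith) hs.le
            _ ≤ (1 - t) * M := mul_le_mul_of_nonneg_left (hub j hj) h1t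
            _ ≤ t * |M| + M := by rw [habs]; nlinarith
        · have hp1 : 0 < t * |M| + M := by rw [habs]; nlinarith
          nlinarith [mul_neg_of_pos_of_neg (h2 j hj) hs]
  · obtain ⟨j₀, hj₀, hMe⟩ := Finset.exists_mem_eq_sup' hJ s
    rw [← hMdef] at hMe
    have hle := Finset.le_sup' (fun j => ρ j * s j) hj₀
    obtain ⟨hρl, hρu⟩ := abs_le.mp (h1 j₀ hj₀)
    rw [sub_le_iff_le_add]
    rcases le_or_gt 0 M with hM0 | hM0
    · have key : M - t * M ≤ ρ j₀ * s j₀ := by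
        have : (1 - t) * M ≤ ρ j₀ * M := mul_le_mul_of_nonneg_right (by linarith) hM0
        calc M - t * M = (1 - t) * M := by ring
          _ ≤ ρ j₀ * M := this
          _ = ρ j₀ * s j₀ := by rw [hMe]
      rw [abs_of_nonneg hM0]
      linarith
    · have key : M + t * M ≤ ρ j₀ * s j₀ := by
        have : (1 + t) * M ≤ ρ j₀ * M := mul_le_mul_of_nonpos_right (by linarith) hM0.le
        calc M + t * M = (1 + t) * M := by ring
          _ ≤ ρ j₀ * M := this
          _ = ρ j₀ * s j₀ := by rw [hMe]
      rw [abs_of_neg hM0]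
      linarith

lemma transplant {ξ ξ' : Fin r → ℝ} {N : ℕ} {ff : Fin N → R} {α : Fin N → Fin r → ℤ}
    {lam : Fin N → ℝ}
    (hpos : ∀ j, 0 < pairing ξ (α j)) (hpos' : ∀ j, 0 < pairing ξ' (α j))
    {ψ : ↥(XanP 𝒜) → ℝ}
    (hψ : ∀ v : XanP 𝒜, (ψ v : EReal) = ⨆ j, fsTerm ξ (α j) (ff j) (lam j) v.1)
    (v : ↥(XanP 𝒜)) :
    (((⨆ j, fsTerm ξ' (α j) (ff j) (lam j) v.1).toReal : ℝ) : EReal)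
        = (⨆ j, fsTerm ξ' (α j) (ff j) (lam j) v.1) ∧
      ∀ t : ℝ, (∀ j, |pairing ξ (α j) / pairing ξ' (α j) - 1| ≤ t) →
        |(⨆ j, fsTerm ξ' (α j) (ff j) (lam j) v.1).toReal - ψ v| ≤ t * |ψ v| := by
  classical
  have hvsem : IsSemival k v.1 := v.2.1
  set J : Finset (Fin N) := Finset.univ.filter (fun j => v.1 (ff j) ≠ ⊤) with hJdef
  have hmemJ : ∀ j, j ∈ J ↔ v.1 (ff j) ≠ ⊤ := by intro j; simp [hJdef]
  set s : Fin N → ℝ := fun j => (pairing ξ (α j))⁻¹ * (lam j - (v.1 (ff j)).toReal) with hsdef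
  set s' : Fin N → ℝ := fun j => (pairing ξ' (α j))⁻¹ * (lam j - (v.1 (ff j)).toReal) with hs'def
  have hcoeξ : ∀ j ∈ J, fsTerm ξ (α j) (ff j) (lam j) v.1 = ((s j : ℝ) : EReal) :=
    fun j hj => fsTerm_coe (hvsem.1 _) ((hmemJ j).mp hj)
  have hcoeξ' : ∀ j ∈ J, fsTerm ξ' (α j) (ff j) (lam j) v.1 = ((s' j : ℝ) : EReal) :=
    fun j hj => fsTerm_coe (hvsem.1 _) ((hmemJ j).mp hj)
  have hbotξ : ∀ j ∉ J, fsTerm ξ (α j) (ff j) (lam j) v.1 = ⊥ := fun j hj =>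
    fsTerm_bot (hpos j) (not_not.mp ((hmemJ j).not.mp hj))
  have hbotξ' : ∀ j ∉ J, fsTerm ξ' (α j) (ff j) (lam j) v.1 = ⊥ := fun j hj =>
    fsTerm_bot (hpos' j) (not_not.mp ((hmemJ j).not.mp hj))
  have hJne : J.Nonempty := by
    rw [Finset.nonempty_iff_ne_empty]
    intro hJe
    have hb : ∀ j, fsTerm ξ (α j) (ff j) (lam j) v.1 = ⊥ := fun j =>
      hbotξ j (by simp [hJe])
    have hsup : (⨆ j, fsTerm ξ (α j) (ff j) (lam j) v.1) = ⊥ :=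
      le_bot_iff.mp (iSup_le fun j => (hb j).le)
    exact EReal.coe_ne_bot _ ((hψ v).trans hsup)
  have hsupξ : (⨆ j, fsTerm ξ (α j) (ff j) (lam j) v.1) = ((J.sup' hJne s : ℝ) : EReal) :=
    iSup_eq_coe_sup' hJne hcoeξ hbotξ
  have hsupξ' : (⨆ j, fsTerm ξ' (α j) (ff j) (lam j) v.1) = ((J.sup' hJne s' : ℝ) : EReal) :=
    iSup_eq_coe_sup' hJne hcoeξ' hbotξ'
  have hψv : ψ v = J.sup' hJne s := EReal.coe_eq_coe_iff.mp ((hψ v).trans hsupξ)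
  constructor
  · rw [hsupξ', EReal.toReal_coe]
  · intro t hts
    rw [hsupξ', EReal.toReal_coe, hψv]
    have hs' : ∀ j ∈ J, s' j = (pairing ξ (α j) / pairing ξ' (α j)) * s j := by
      intro j _
      have hP := (hpos j).ne'
      have hP' := (hpos' j).ne'
      rw [hsdef, hs'def]
      field_simp
    have he : J.sup' hJne s'
        = J.sup' hJne (fun j => (pairing ξ (α j) / pairing ξ' (α j)) * s j) :=
      Finset.sup'_congr hJne rfl hs'
    rw [he]
    exact realmax hJne s _ (fun j _ => hts j) (fun j _ => div_pos (hpos j) (hpos' j))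


lemma closure_approx {ξ : Fin r → ℝ} {φ : C(↥(XanP 𝒜), ℝ)} (hφ : φ ∈ cpsh 𝒜 ξ)
    {K : Set (↥(XanP 𝒜))} (hK : IsCompact K) {ε : ℝ} (hε : 0 < ε) :
    ∃ ψ : C(↥(XanP 𝒜), ℝ), IsFS 𝒜 ξ ⇑ψ ∧ ∀ v ∈ K, |ψ v - φ v| < ε := by
  have hb := nhds_basis_uniformity' (ContinuousMap.hasBasis_compactConvergenceUniformity
      (α := ↥(XanP 𝒜)) (β := ℝ)) (x := φ)
  rw [cpsh, mem_closure_iff_nhds_basis hb] at hφ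
  obtain ⟨ψ, hψFS, hψU⟩ := hφ (K, {p : ℝ × ℝ | dist p.1 p.2 < ε})
    ⟨hK, Metric.dist_mem_uniformity hε⟩
  refine ⟨ψ, hψFS, fun v hv => ?_⟩
  have h2 : ∀ x ∈ K, dist (φ x) (ψ x) < ε := hψU
  have h3 := h2 v hv
  rw [Real.dist_eq, abs_sub_comm] at h3
  exact h3

lemma exists_exhaustion (h0 : 𝒜 0 = Submodule.span k {(1 : R)}) :
    ∃ Z : ℕ → Set (↥(XanP 𝒜)), (∀ n, IsCompact (Z n)) ∧ (∀ i j, i ≤ j → Z i ⊆ Z j) ∧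
      ∀ K : Set (↥(XanP 𝒜)), IsCompact K → ∃ I : ℕ, ∀ i ≥ I, K ⊆ Z i := by
  classical
  obtain ⟨G, hG⟩ := (inferInstance : Algebra.FiniteType k R).out
  have hNoeth : IsNoetherianRing R := Algebra.FiniteType.isNoetherianRing k R
  obtain ⟨H, hH⟩ := IsNoetherian.noetherian (mIdeal 𝒜)
  choose B hB using fun (n : ℕ) (f : R) => exists_lower_bound G hG (-(n : ℝ)) f
  set D : ℝ → ℝ → Set (EReal × EReal × EReal) := fun a b =>
    (fun p : EReal × EReal => (p.1, p.2, p.1 + p.2)) ''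
      (Set.Icc (a : EReal) ⊤ ×ˢ Set.Icc (b : EReal) ⊤) with hDdef
  have hDc : ∀ a b : ℝ, IsClosed (D a b) := by
    intro a b
    apply IsCompact.isClosed
    apply IsCompact.image_of_continuousOn
    · exact (isClosed_Icc.isCompact).prod (isClosed_Icc.isCompact)
    · intro p hp
      have h1 : p.1 ≠ ⊥ := (lt_of_lt_of_le (EReal.bot_lt_coe a) hp.1.1).ne'
      have h2 : p.2 ≠ ⊥ := (lt_of_lt_of_le (EReal.bot_lt_coe b) hp.2.1).ne'
      exact (continuousAt_fst.prodMk (continuousAt_snd.prodMk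
        (EReal.continuousAt_add (Or.inr h2) (Or.inl h1)))).continuousWithinAt
  set V : ℕ → Set (R → EReal) := fun n =>
    {v | (∀ f : R, (B n f : EReal) ≤ v f) ∧ (∀ g ∈ G, ((-(n : ℝ) : ℝ) : EReal) ≤ v g) ∧
      v 0 = ⊤ ∧ (∀ c : k, c ≠ 0 → v (algebraMap k R c) = 0) ∧
      (∀ f g : R, v f ≤ v (f + g) ∨ v g ≤ v (f + g)) ∧
      (∀ f g : R, (v f, v g, v (f * g)) ∈ D (B n f) (B n g))} with hVdef
  have hVclosed : ∀ n, IsClosed (V n) := by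
    intro n
    have h1 : IsClosed (⋂ f : R, {v : R → EReal | (B n f : EReal) ≤ v f}) :=
      isClosed_iInter fun f => IsClosed.preimage (continuous_apply f) isClosed_Ici
    have h2 : IsClosed (⋂ g : G, {v : R → EReal | ((-(n : ℝ) : ℝ) : EReal) ≤ v g.1}) :=
      isClosed_iInter fun g => IsClosed.preimage (continuous_apply g.1) isClosed_Ici
    have h3 : IsClosed {v : R → EReal | v 0 = ⊤} :=
      IsClosed.preimage (continuous_apply 0) isClosed_singleton
    have h4 : IsClosed (⋂ c : {c : k // c ≠ 0}, {v : R → EReal | v (algebraMap k R c.1) = 0}) :=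
      isClosed_iInter fun c => IsClosed.preimage (continuous_apply _) isClosed_singleton
    have h5 : IsClosed (⋂ p : R × R, ({v : R → EReal | v p.1 ≤ v (p.1 + p.2)} ∪
        {v : R → EReal | v p.2 ≤ v (p.1 + p.2)})) :=
      isClosed_iInter fun p => IsClosed.union
        (isClosed_le (continuous_apply p.1) (continuous_apply (p.1 + p.2)))
        (isClosed_le (continuous_apply p.2) (continuous_apply (p.1 + p.2)))
    have h6 : IsClosed (⋂ p : R × R, {v : R → EReal |
        (v p.1, v p.2, v (p.1 * p.2)) ∈ D (B n p.1) (B n p.2)}) :=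
      isClosed_iInter fun p => IsClosed.preimage ((continuous_apply p.1).prodMk
        ((continuous_apply p.2).prodMk (continuous_apply (p.1 * p.2)))) (hDc _ _)
    have e : V n = (⋂ f : R, {v : R → EReal | (B n f : EReal) ≤ v f}) ∩
        ((⋂ g : G, {v : R → EReal | ((-(n : ℝ) : ℝ) : EReal) ≤ v g.1}) ∩
        ({v : R → EReal | v 0 = ⊤} ∩
        ((⋂ c : {c : k // c ≠ 0}, {v : R → EReal | v (algebraMap k R c.1) = 0}) ∩
        ((⋂ p : R × R, ({v : R → EReal | v p.1 ≤ v (p.1 + p.2)} ∪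
            {v : R → EReal | v p.2 ≤ v (p.1 + p.2)})) ∩
        (⋂ p : R × R, {v : R → EReal |
            (v p.1, v p.2, v (p.1 * p.2)) ∈ D (B n p.1) (B n p.2)}))))) := by
      ext v
      simp only [hVdef, Set.mem_setOf_eq, Set.mem_inter_iff, Set.mem_iInter, Set.mem_union,
        Subtype.forall, Prod.forall] <;> tauto
    rw [e]
    exact h1.inter (h2.inter (h3.inter (h4.inter (h5.inter h6))))
  have hVmem : ∀ (n : ℕ) (v : R → EReal), IsSemival k v →
      (∀ g ∈ G, ((-(n : ℝ) : ℝ) : EReal) ≤ v g) → v ∈ V n := by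
    intro n v hv hb
    refine ⟨fun f => hB n f v hv hb, hb, hv.2.2.2.1, fun c hc => hv.2.2.2.2 c hc,
      fun f g => min_le_iff.mp (hv.2.2.1 f g), fun f g => ?_⟩
    exact ⟨(v f, v g), ⟨⟨hB n f v hv hb, le_top⟩, ⟨hB n g v hv hb, le_top⟩⟩,
      by rw [hv.2.1 f g]⟩
  have hVsem : ∀ (n : ℕ) (v : R → EReal), v ∈ V n → IsSemival k v := by
    intro n v hv
    obtain ⟨hlb, -, h0v, halg, hmin, hmul⟩ := hv
    refine ⟨fun f => ?_, fun f g => ?_, fun f g => min_le_iff.mpr (hmin f g), h0v, halg⟩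
    · exact (lt_of_lt_of_le (EReal.bot_lt_coe (B n f)) (hlb f)).ne'
    · obtain ⟨p, -, hpe⟩ := hmul f g
      rw [Prod.mk.injEq, Prod.mk.injEq] at hpe
      obtain ⟨e1, e2, e3⟩ := hpe
      rw [← e3, ← e1, ← e2]
  have hVcomp : ∀ n, IsCompact (V n) := fun n => (hVclosed n).isCompact
  set Wa : ℕ → Set (R → EReal) := fun n =>
    V n ∩ (⋃ h ∈ (H : Set R), {v : R → EReal | v h ≤ ((n : ℝ) : EReal)}) with hWdef
  have hWclosed : ∀ n, IsClosed (Wa n) := fun n => (hVclosed n).inter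
    ((H.finite_toSet).isClosed_biUnion fun h _ =>
      IsClosed.preimage (continuous_apply h) isClosed_Iic)
  have hWcomp : ∀ n, IsCompact (Wa n) := fun n => (hWclosed n).isCompact
  have hHm : ∀ h ∈ H, h ∈ mIdeal 𝒜 := by
    intro h hh
    rw [← hH]
    exact Submodule.subset_span hh
  have hWsub : ∀ n, Wa n ⊆ XanP 𝒜 := by
    intro n v hv
    obtain ⟨hvV, hvU⟩ := hv
    refine ⟨hVsem n v hvV, ?_⟩
    intro hveq
    simp only [Set.mem_iUnion] at hvU
    obtain ⟨h, hh, hle⟩ := hvU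
    rw [hveq] at hle
    have hle' : oFun 𝒜 h ≤ ((n : ℝ) : EReal) := hle
    have htop : oFun 𝒜 h = ⊤ := if_pos (hHm h hh)
    rw [htop] at hle'
    exact (EReal.coe_lt_top (n : ℝ)).not_ge hle'
  have hoFun : ∀ v : R → EReal, IsSemival k v → (∀ h ∈ H, v h = ⊤) → v = oFun 𝒜 := by
    intro v hv hvH
    refine eq_oFun 𝒜 h0 hv ?_
    intro f hf
    refine val_top_of_mem_span hv (H := (H : Set R)) (fun h hh => hvH h hh) ?_
    show f ∈ Submodule.span R (H : Set R)
    rw [hH]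
    exact hf
  set Z' : ℕ → Set (↥(XanP 𝒜)) := fun n => Subtype.val ⁻¹' (Wa n) with hZ'def
  have hZ'comp : ∀ n, IsCompact (Z' n) := by
    intro n
    rw [hZ'def]
    rw [Topology.IsEmbedding.subtypeVal.isCompact_iff, Subtype.image_preimage_coe,
      Set.inter_eq_right.mpr (hWsub n)]
    exact hWcomp n
  refine ⟨fun n => ⋃ j ∈ Finset.range (n + 1), Z' j, fun n => ?_, fun i j hij => ?_,
    fun K hK => ?_⟩
  · exact (Finset.range (n + 1)).finite_toSet.isCompact_biUnion fun j _ => hZ'comp j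
  · exact Set.biUnion_subset_biUnion_left
      (by exact_mod_cast Finset.range_subset_range.mpr (by omega))
  · rcases K.eq_empty_or_nonempty with rfl | hKne
    · exact ⟨0, fun i _ => Set.empty_subset _⟩
    have hKim : IsCompact (Subtype.val '' K) := hK.image continuous_subtype_val
    have hKimsub : Subtype.val '' K ⊆ XanP 𝒜 := by
      rintro v ⟨x, -, rfl⟩
      exact x.2
    have hKsem : ∀ v ∈ Subtype.val '' K, IsSemival k v := fun v hv => (hKimsub hv).1
    have hGb : ∀ g : R, ∃ n : ℕ, ∀ v ∈ Subtype.val '' K, ((-(n : ℝ) : ℝ) : EReal) ≤ v g := by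
      intro g
      have himc : IsCompact ((fun v : R → EReal => v g) '' (Subtype.val '' K)) :=
        hKim.image (continuous_apply g)
      have hne : ((fun v : R → EReal => v g) '' (Subtype.val '' K)).Nonempty :=
        (hKne.image _).image _
      obtain ⟨v₀, hv₀, hv₀e⟩ := himc.sInf_mem hne
      have hbot : sInf ((fun v : R → EReal => v g) '' (Subtype.val '' K)) ≠ ⊥ := by
        rw [← hv₀e]
        exact (hKsem v₀ hv₀).1 g
      obtain ⟨n, hn⟩ : ∃ n : ℕ, ((-(n : ℝ) : ℝ) : EReal)
          ≤ sInf ((fun v : R → EReal => v g) '' (Subtype.val '' K)) := by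
        set m := sInf ((fun v : R → EReal => v g) '' (Subtype.val '' K)) with hmdef
        by_cases hmt : m = ⊤
        · exact ⟨0, hmt ▸ le_top⟩
        · have hm : m = ((m.toReal : ℝ) : EReal) := (EReal.coe_toReal hmt hbot).symm
          obtain ⟨nn, hnn⟩ := exists_nat_gt (-m.toReal)
          refine ⟨nn, ?_⟩
          rw [hm]
          exact EReal.coe_le_coe_iff.mpr (by linarith)
      exact ⟨n, fun v hv => le_trans hn (csInf_le (OrderBot.bddBelow _)
        (Set.mem_image_of_mem _ hv))⟩
    choose nG hnG using hGb
    have hHb : ∃ n : ℕ, ∀ v ∈ Subtype.val '' K, ∃ h ∈ H, v h ≤ ((n : ℝ) : EReal) := by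
      by_contra hc
      push_neg at hc
      set C : ℕ → Set (R → EReal) := fun n =>
        (Subtype.val '' K) ∩ {v | ∀ h ∈ H, ((n : ℝ) : EReal) ≤ v h} with hCdef
      have hCcl : ∀ n : ℕ, IsClosed {v : R → EReal | ∀ h ∈ H, ((n : ℝ) : EReal) ≤ v h} := by
        intro n
        have e : {v : R → EReal | ∀ h ∈ H, ((n : ℝ) : EReal) ≤ v h}
            = ⋂ h : H, {v : R → EReal | ((n : ℝ) : EReal) ≤ v h.1} := by
          ext v
          simp only [Set.mem_setOf_eq, Set.mem_iInter, Subtype.forall]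
        rw [e]
        exact isClosed_iInter fun h => IsClosed.preimage (continuous_apply h.1) isClosed_Ici
      have hCne : ∀ n, (C n).Nonempty := by
        intro n
        obtain ⟨v, hvK, hvH⟩ := hc n
        exact ⟨v, hvK, fun h hh => (hvH h hh).le⟩
      have hCsub : ∀ n, C (n + 1) ⊆ C n := by
        intro n v hv
        refine ⟨hv.1, fun h hh => le_trans ?_ (hv.2 h hh)⟩
        exact EReal.coe_le_coe_iff.mpr (by push_cast; linarith)
      obtain ⟨vI, hvI⟩ := IsCompact.nonempty_iInter_of_sequence_nonempty_isCompact_isClosed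
        C hCsub hCne (hKim.inter_right (hCcl 0)) (fun n => (hKim.isClosed).inter (hCcl n))
      rw [Set.mem_iInter] at hvI
      have hvIK : vI ∈ Subtype.val '' K := (hvI 0).1
      have hvtop : ∀ h ∈ H, vI h = ⊤ := by
        intro h hh
        by_contra hne
        obtain ⟨y, hy1, -⟩ := EReal.exists_between_coe_real (lt_top_iff_ne_top.mpr hne)
        obtain ⟨n, hn⟩ := exists_nat_gt y
        have h5 := (hvI n).2 h hh
        have h6 : ((n : ℝ) : EReal) < ((y : ℝ) : EReal) := lt_of_le_of_lt h5 hy1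
        rw [EReal.coe_lt_coe_iff] at h6
        linarith
      exact (hKimsub hvIK).2 (hoFun vI (hKsem _ hvIK) hvtop)
    obtain ⟨n₂, hn₂⟩ := hHb
    set n₁ : ℕ := G.sup nG with hn₁def
    refine ⟨max n₁ n₂, fun i hi => ?_⟩
    have hsub : K ⊆ Z' i := by
      intro x hx
      show (x : R → EReal) ∈ Wa i
      have hxb : ∀ g ∈ G, ((-(i : ℝ) : ℝ) : EReal) ≤ x.1 g := by
        intro g hg
        refine le_trans ?_ (hnG g x.1 (Set.mem_image_of_mem _ hx))
        refine EReal.coe_le_coe_iff.mpr ?_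
        have h1 : (nG g : ℝ) ≤ (i : ℝ) := by
          exact_mod_cast le_trans (Finset.le_sup hg) (le_trans (le_max_left _ _) hi)
        linarith
      refine ⟨hVmem i x.1 x.2.1 hxb, ?_⟩
      obtain ⟨h, hh, hle⟩ := hn₂ x.1 (Set.mem_image_of_mem _ hx)
      simp only [Set.mem_iUnion]
      refine ⟨h, hh, le_trans hle (EReal.coe_le_coe_iff.mpr ?_)⟩
      exact_mod_cast le_trans (le_max_right _ _) hi
    exact fun x hx => Set.mem_biUnion (Finset.self_mem_range_succ i) (hsub hx)

end NA

end AuxNA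

section Statements

variable {k : Type*} [Field k] [IsAlgClosed k] [CharZero k]
variable {R : Type*} [CommRing R] [IsDomain R] [IsIntegrallyClosed R] [Algebra k R]
  [Algebra.FiniteType k R]
variable {r : ℕ} (𝒜 : (Fin r → ℤ) → Submodule k R) [GradedAlgebra 𝒜]

theorem statement2 (h0 : 𝒜 0 = Submodule.span k {(1 : R)}) (ξ : Fin r → ℝ)
    (hξ : IsReeb 𝒜 ξ) (φ : C(↥(XanP 𝒜), ℝ)) (hφ : φ ∈ cpsh 𝒜 ξ)
    (ξi : ℕ → Fin r → ℝ) (hξi : ∀ i, IsReeb 𝒜 (ξi i))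
    (hconv : Filter.Tendsto ξi Filter.atTop (nhds ξ)) :
    ∃ φi : ℕ → ↥(XanP 𝒜) → ℝ, (∀ i, IsFS 𝒜 (ξi i) (φi i)) ∧
      ∀ K : Set (↥(XanP 𝒜)), IsCompact K →
        TendstoUniformlyOn (fun i => φi i) ⇑φ Filter.atTop K := by
  classical
  obtain ⟨Z, hZc, hZmono, hZcof⟩ := NA.exists_exhaustion 𝒜 h0
  have happrox : ∀ m : ℕ, ∃ ψ : C(↥(XanP 𝒜), ℝ), IsFS 𝒜 ξ ⇑ψ ∧
      ∀ v ∈ Z m, |ψ v - φ v| < 1 / ((m : ℝ) + 1) :=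
    fun m => NA.closure_approx 𝒜 hφ (hZc m) (by positivity)
  choose ψ hψFS hψap using happrox
  choose N ff aa ll hdata hrad heq using hψFS
  have hAne : ∀ (m : ℕ) (j : Fin (N m)), 𝒜 (aa m j) ≠ ⊥ := by
    intro m j hbot
    have h1 := (hdata m j).2.1
    rw [hbot, Submodule.mem_bot] at h1
    exact (hdata m j).2.2 h1
  have hpos : ∀ (m : ℕ) (j : Fin (N m)), 0 < pairing ξ (aa m j) :=
    fun m j => hξ _ (hdata m j).1 (hAne m j)
  have hpos' : ∀ (i m : ℕ) (j : Fin (N m)), 0 < pairing (ξi i) (aa m j) :=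
    fun i m j => hξi i _ (hdata m j).1 (hAne m j)
  set cond : ℕ → ℕ → Prop := fun i m => ∀ m' ≤ m, ∀ j : Fin (N m'),
    |pairing ξ (aa m' j) / pairing (ξi i) (aa m' j) - 1| ≤ 1 / ((m : ℝ) + 1) with hconddef
  set mi : ℕ → ℕ := fun i => Nat.findGreatest (cond i) i with hmidef
  refine ⟨fun i v => (⨆ j, fsTerm (ξi i) (aa (mi i) j) (ff (mi i) j) (ll (mi i) j) v.1).toReal,
    fun i => ?_, fun K hK => ?_⟩
  · exact ⟨N (mi i), ff (mi i), aa (mi i), ll (mi i), hdata (mi i), hrad (mi i),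
      fun v => (NA.transplant 𝒜 (hpos (mi i)) (hpos' i (mi i)) (heq (mi i)) v).1⟩
  · rw [Metric.tendstoUniformlyOn_iff]
    intro ε hε
    obtain ⟨I₀, hI₀⟩ := hZcof K hK
    obtain ⟨M₀, hM₀⟩ := hK.exists_bound_of_continuousOn φ.continuous.continuousOn
    set M : ℝ := max M₀ 0 with hMdef
    have hM : ∀ x ∈ K, |φ x| ≤ M := fun x hx =>
      le_trans (by rw [← Real.norm_eq_abs]; exact hM₀ x hx) (le_max_left _ _)
    have hM0 : 0 ≤ M := le_max_right _ _
    obtain ⟨n₀, hn₀⟩ := exists_nat_gt ((M + 2) / ε)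
    set m₁ : ℕ := max n₀ (max I₀ 1) with hm₁def
    -- eventually cond i m₁ and m₁ ≤ i
    have hev1 : ∀ᶠ i in atTop, ∀ m' ∈ Finset.range (m₁ + 1), ∀ j : Fin (N m'),
        |pairing ξ (aa m' j) / pairing (ξi i) (aa m' j) - 1| ≤ 1 / ((m₁ : ℝ) + 1) := by
      rw [eventually_all_finset]
      intro m' _
      rw [Filter.eventually_all]
      intro j
      have hcont : Continuous fun ζ : Fin r → ℝ => pairing ζ (aa m' j) := by
        unfold pairing
        exact continuous_finset_sum _ fun l _ => (continuous_apply l).mul continuous_const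
      have htend : Tendsto (fun i => pairing (ξi i) (aa m' j)) atTop
          (𝓝 (pairing ξ (aa m' j))) := (hcont.tendsto ξ).comp hconv
      have htd : Tendsto (fun i => |pairing ξ (aa m' j) / pairing (ξi i) (aa m' j) - 1|)
          atTop (𝓝 0) := by
        have h2 : Tendsto (fun i => pairing ξ (aa m' j) / pairing (ξi i) (aa m' j))
            atTop (𝓝 1) := by
          have := Filter.Tendsto.div (tendsto_const_nhds
            (x := pairing ξ (aa m' j))) htend (hpos m' j).ne'
          rwa [div_self (hpos m' j).ne'] at this
        have h3 := (h2.sub_const 1).abs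
        simpa using h3
      exact (htd.eventually_lt_const (by positivity)).mono fun i hi => hi.le
    have hev : ∀ᶠ i in atTop, m₁ ≤ mi i ∧ cond i (mi i) := by
      filter_upwards [hev1, eventually_ge_atTop m₁] with i hi hm₁i
      have hcondm₁ : cond i m₁ := by
        intro m' hm' j
        exact hi m' (Finset.mem_range.mpr (Nat.lt_succ_of_le hm')) j
      exact ⟨Nat.le_findGreatest hm₁i hcondm₁,
        Nat.findGreatest_spec hm₁i hcondm₁⟩
    filter_upwards [hev] with i hi
    intro v hv
    obtain ⟨hmi, hci⟩ := hi
    have hI₀m : I₀ ≤ mi i := le_trans (le_trans (le_max_left _ _) (le_max_right n₀ _)) hmi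
    have hvZ : v ∈ Z (mi i) := hI₀ (mi i) hI₀m hv
    have hap := hψap (mi i) v hvZ
    have htp := (NA.transplant 𝒜 (hpos (mi i)) (hpos' i (mi i)) (heq (mi i)) v).2
      (1 / ((mi i : ℝ) + 1)) (fun j => hci (mi i) le_rfl j)
    set δ : ℝ := 1 / ((mi i : ℝ) + 1) with hδdef
    have hδpos : 0 < δ := by positivity
    have hδ1 : δ ≤ 1 := by
      rw [hδdef]
      rw [div_le_one (by positivity)]
      linarith [show (0:ℝ) ≤ (mi i : ℝ) from Nat.cast_nonneg _]
    have hδm₁ : δ ≤ 1 / ((m₁ : ℝ) + 1) := by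
      apply div_le_div_of_nonneg_left one_pos.le ?_ ?_
      · positivity
      · exact_mod_cast by linarith [Nat.cast_le (α := ℝ).mpr hmi]
    have hψb : |ψ (mi i) v| ≤ M + 1 := by
      have h1 := hM v hv
      have h2 : |ψ (mi i) v| - |φ v| ≤ |ψ (mi i) v - φ v| := abs_sub_abs_le_abs_sub _ _
      have h3 : (1 : ℝ) / ((mi i : ℝ) + 1) ≤ 1 := hδ1
      linarith [hap]
    have htri : dist (φ v) ((⨆ j, fsTerm (ξi i) (aa (mi i) j) (ff (mi i) j)
        (ll (mi i) j) v.1).toReal) ≤ δ * (M + 1) + δ := by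
      rw [Real.dist_eq]
      have h4 := abs_sub_le (φ v) (ψ (mi i) v)
        ((⨆ j, fsTerm (ξi i) (aa (mi i) j) (ff (mi i) j) (ll (mi i) j) v.1).toReal)
      have h5 : |φ v - ψ (mi i) v| < δ := by rw [abs_sub_comm]; exact hap
      have h6 : |ψ (mi i) v - (⨆ j, fsTerm (ξi i) (aa (mi i) j) (ff (mi i) j)
          (ll (mi i) j) v.1).toReal| ≤ δ * (M + 1) := by
        rw [abs_sub_comm]
        refine le_trans htp ?_
        exact mul_le_mul_of_nonneg_left hψb hδpos.le
      linarith
    have hfin : δ * (M + 1) + δ < ε := by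
      have h7 : δ * (M + 1) + δ = δ * (M + 2) := by ring
      rw [h7]
      have h8 : δ * (M + 2) ≤ (1 / ((m₁ : ℝ) + 1)) * (M + 2) :=
        mul_le_mul_of_nonneg_right hδm₁ (by linarith)
      have h9 : (1 / ((m₁ : ℝ) + 1)) * (M + 2) < ε := by
        rw [div_mul_eq_mul_div, div_lt_iff₀ (by positivity)]
        have h10 : (M + 2) / ε < (n₀ : ℝ) := hn₀
        have h11 : (n₀ : ℝ) ≤ (m₁ : ℝ) := by exact_mod_cast le_max_left _ _
        rw [div_lt_iff₀ hε] at h10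
        nlinarith
      linarith
    exact lt_of_le_of_lt htri hfin

end Statements
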